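/- If there is a temporal beer path from x to y within [t_α, t_ω], then there exists a shortest temporal beer path from x to y within [t_α, t_ω], traversing some beer vertex b at a time t ∈ T_b, such that the subpath from x to b is a distance-wise non-dominated path within [t_α, t_ω] and the subpath from b to y is an inverse-distance-wise non-dominated path within [t_α, t_ω]. -/

import Mathlib

open scoped Classical

structure TEdge (V : Type) where
  src : V
  dst : V
  t : ℝ
  len : ℝ

variable {V : Type}

/-- Consecutive compatibility of temporal edges. -/
def compat (e f : TEdge V) : Prop := e.dst = f.src ∧ e.t + e.len ≤ f.t

/-- A temporal path from `x` to `y`: a nonempty list of temporal edges of `E`,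
starting at `x`, ending at `y`, consecutively compatible. -/
def IsPath (E : Set (TEdge V)) (x y : V) (p : List (TEdge V)) : Prop :=
  p ≠ [] ∧ (∀ e ∈ p, e ∈ E) ∧ p.head?.map TEdge.src = some x ∧
    p.getLast?.map TEdge.dst = some y ∧ List.Chain' compat p

/-- Starting time of a temporal path. -/
def startT (p : List (TEdge V)) : ℝ := ((p.head?).map TEdge.t).getD 0

/-- Ending (arrival) time of a temporal path. -/
def endT (p : List (TEdge V)) : ℝ := ((p.getLast?).map (fun e => e.t + e.len)).getD 0

/-- Distance (sum of traversal times) of a temporal path. -/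
def distT (p : List (TEdge V)) : ℝ := (p.map TEdge.len).sum

/-- `p = q ++ r` witnesses a visit of beer vertex `b` at time `t`:
`b` is the endpoint of `q` (or the source `x` if `q` is empty), `t` is no
earlier than the arrival of the last edge of `q` and no later than the
departure of the first edge of `r`. -/
def BeerSplit (x b : V) (t : ℝ) (p q r : List (TEdge V)) : Prop :=
  p = q ++ r ∧ ((q.getLast?).map TEdge.dst).getD x = b ∧
    (∀ e ∈ q.getLast?, e.t + e.len ≤ t) ∧ (∀ e ∈ r.head?, t ≤ e.t)

/-- A temporal beer path from `x` to `y`: a temporal path visiting some active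
beer vertex `b ∈ B` at some time `t ∈ T b` between the arrival at `b` and the
departure from `b`. -/
def IsBeerPath (E : Set (TEdge V)) (B : Set V) (T : V → Set ℝ) (x y : V)
    (p : List (TEdge V)) : Prop :=
  IsPath E x y p ∧ ∃ b ∈ B, ∃ t ∈ T b, ∃ q r, BeerSplit x b t p q r

/-- The path `p` starts no earlier than `tα` and ends no later than `tω`. -/
def InWin (tα tω : ℝ) (p : List (TEdge V)) : Prop :=
  tα ≤ startT p ∧ endT p ≤ tω

/-- `p` is a distance-wise non-dominated temporal `x`-`y` path within `[tα, tω]`. -/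
def DistNonDomW (E : Set (TEdge V)) (x y : V) (tα tω : ℝ) (p : List (TEdge V)) : Prop :=
  IsPath E x y p ∧ InWin tα tω p ∧
  ¬ ∃ p', IsPath E x y p' ∧ InWin tα tω p' ∧ distT p' ≤ distT p ∧ endT p' ≤ endT p ∧
      (distT p' < distT p ∨ endT p' < endT p)

/-- `p` is an inverse-distance-wise non-dominated temporal `x`-`y` path within `[tα, tω]`. -/
def InvDistNonDomW (E : Set (TEdge V)) (x y : V) (tα tω : ℝ) (p : List (TEdge V)) : Prop :=
  IsPath E x y p ∧ InWin tα tω p ∧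
  ¬ ∃ p', IsPath E x y p' ∧ InWin tα tω p' ∧ distT p' ≤ distT p ∧ startT p ≤ startT p' ∧
      (distT p' < distT p ∨ startT p < startT p')

section Aux

variable {V : Type}

lemma distT_append (q r : List (TEdge V)) : distT (q ++ r) = distT q + distT r := by
  simp [distT]

lemma startT_append (q r : List (TEdge V)) (hq : q ≠ []) : startT (q ++ r) = startT q := by
  cases q with
  | nil => exact absurd rfl hq
  | cons a l => rfl

lemma endT_append (q r : List (TEdge V)) (hr : r ≠ []) : endT (q ++ r) = endT r := by
  unfold endT
  rw [List.getLast?_append_of_ne_nil q hr]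

lemma startT_eq (p : List (TEdge V)) (e : TEdge V) (h : p.head? = some e) :
    startT p = e.t := by simp [startT, h]

lemma endT_eq (p : List (TEdge V)) (e : TEdge V) (h : p.getLast? = some e) :
    endT p = e.t + e.len := by simp [endT, h]

lemma head_src {p : List (TEdge V)} {x : V} (h : p.head?.map TEdge.src = some x) :
    ∃ e, p.head? = some e ∧ e.src = x := by
  cases hp : p.head? with
  | none => rw [hp] at h; simp at h
  | some e => rw [hp] at h; simp at h; exact ⟨e, rfl, h⟩

lemma last_dst {p : List (TEdge V)} {y : V} (h : p.getLast?.map TEdge.dst = some y) :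
    ∃ e, p.getLast? = some e ∧ e.dst = y := by
  cases hp : p.getLast? with
  | none => rw [hp] at h; simp at h
  | some e => rw [hp] at h; simp at h; exact ⟨e, rfl, h⟩

lemma head?_append' (q r : List (TEdge V)) (h : q ≠ []) : (q ++ r).head? = q.head? := by
  cases q with
  | nil => exact absurd rfl h
  | cons a l => rfl

lemma chain'_lt (E : Set (TEdge V)) (hpos : ∀ e ∈ E, 0 < e.len) :
    ∀ p : List (TEdge V), (∀ e ∈ p, e ∈ E) → List.Chain' compat p →
      List.Chain' (fun e f : TEdge V => e.t < f.t) p := by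
  intro p
  induction p with
  | nil => intros; exact List.isChain_nil
  | cons a l ih =>
    intro h hc
    dsimp only [List.Chain'] at hc ⊢
    rw [List.isChain_cons] at hc ⊢
    refine ⟨?_, ih (fun e he => h e (List.mem_cons_of_mem a he)) hc.2⟩
    intro f hf
    have h1 := (hc.1 f hf).2
    have h2 := hpos a (h a List.mem_cons_self)
    linarith

lemma nodup_of_path (E : Set (TEdge V)) (hpos : ∀ e ∈ E, 0 < e.len)
    (p : List (TEdge V)) (h : ∀ e ∈ p, e ∈ E) (hc : List.Chain' compat p) :
    p.Nodup := by
  have hlt := chain'_lt E hpos p h hc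
  haveI : IsTrans (TEdge V) (fun e f => e.t < f.t) := ⟨fun a b c hab hbc => lt_trans hab hbc⟩
  have hpw := List.isChain_iff_pairwise.mp hlt
  exact hpw.imp fun {a b} h hab => absurd h (by rw [hab]; exact lt_irrefl _)

lemma startT_le_endT (E : Set (TEdge V)) (hpos : ∀ e ∈ E, 0 < e.len) :
    ∀ p : List (TEdge V), p ≠ [] → (∀ e ∈ p, e ∈ E) → List.Chain' compat p →
      startT p ≤ endT p := by
  intro p
  induction p with
  | nil => intro h; exact absurd rfl h
  | cons a l ih =>
    intro _ h hc
    cases l with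
    | nil =>
      have := hpos a (h a List.mem_cons_self)
      simp only [startT, endT, List.head?_cons, List.getLast?_singleton, Option.map_some,
        Option.getD_some]
      linarith
    | cons b m =>
      dsimp only [List.Chain'] at hc
      rw [List.isChain_cons_cons] at hc
      have h1 := hpos a (h a List.mem_cons_self)
      have h2 : a.t + a.len ≤ b.t := hc.1.2
      have h3 := ih (by simp) (fun e he => h e (List.mem_cons_of_mem a he)) hc.2
      have hend : endT (a :: b :: m) = endT (b :: m) := by
        simp [endT, List.getLast?_cons_cons]
      have hst : startT (a :: b :: m) = a.t := rfl
      have hst2 : startT (b :: m) = b.t := rfl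
      rw [hend, hst]
      rw [hst2] at h3
      linarith

lemma finite_goodlists (E : Set (TEdge V)) (hE : E.Finite) (hpos : ∀ e ∈ E, 0 < e.len) :
    {p : List (TEdge V) | (∀ e ∈ p, e ∈ E) ∧ List.Chain' compat p}.Finite := by
  haveI : Fintype ↥E := hE.fintype
  set g : List (TEdge V) → List ↥E :=
    fun p => p.filterMap (fun e => if h : e ∈ E then some ⟨e, h⟩ else none) with hg
  have hmap : ∀ p : List (TEdge V), (∀ e ∈ p, e ∈ E) → (g p).map Subtype.val = p := by
    intro p
    induction p with
    | nil => intro _; rfl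
    | cons a l ih =>
      intro h
      have ha : a ∈ E := h a List.mem_cons_self
      simp only [hg, List.filterMap_cons, dif_pos ha, List.map_cons]
      exact congrArg (a :: ·) (ih fun e he => h e (List.mem_cons_of_mem a he))
  apply Set.Finite.of_finite_image (f := g)
  · apply (List.finite_length_le ↥E (Fintype.card ↥E)).subset
    rintro l ⟨p, hp, rfl⟩
    have hnd : p.Nodup := nodup_of_path E hpos p hp.1 hp.2
    have hnd' : (g p).Nodup := by
      have := hmap p hp.1
      exact List.Nodup.of_map Subtype.val (by rw [this]; exact hnd)
    exact hnd'.length_le_card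
  · intro p hp q hq hpq
    rw [← hmap p hp.1, ← hmap q hq.1, hpq]

lemma exists_nondom_q (E : Set (TEdge V)) (hE : E.Finite) (hpos : ∀ e ∈ E, 0 < e.len)
    (x b : V) (tα tω : ℝ) (q0 : List (TEdge V))
    (h0 : IsPath E x b q0) (hw : InWin tα tω q0) :
    ∃ q, IsPath E x b q ∧ InWin tα tω q ∧ distT q ≤ distT q0 ∧ endT q ≤ endT q0 ∧
      DistNonDomW E x b tα tω q := by
  set Q : Set (List (TEdge V)) :=
    {q | IsPath E x b q ∧ InWin tα tω q ∧ distT q ≤ distT q0 ∧ endT q ≤ endT q0} with hQdef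
  have hQfin : Q.Finite :=
    (finite_goodlists E hE hpos).subset fun q hq => ⟨hq.1.2.1, hq.1.2.2.2.2⟩
  have hQne : Q.Nonempty := ⟨q0, h0, hw, le_refl _, le_refl _⟩
  obtain ⟨q1, hq1, hmin1⟩ := Set.exists_min_image Q distT hQfin hQne
  set Q2 : Set (List (TEdge V)) := {q ∈ Q | distT q ≤ distT q1} with hQ2def
  have hQ2fin : Q2.Finite := hQfin.subset fun q hq => hq.1
  obtain ⟨q2, hq2, hmin2⟩ := Set.exists_min_image Q2 endT hQ2fin ⟨q1, hq1, le_refl _⟩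
  refine ⟨q2, hq2.1.1, hq2.1.2.1, hq2.1.2.2.1, hq2.1.2.2.2, hq2.1.1, hq2.1.2.1, ?_⟩
  rintro ⟨q', hq'path, hq'win, hd, he, hstrict⟩
  have hq'Q : q' ∈ Q := ⟨hq'path, hq'win, hd.trans hq2.1.2.2.1, he.trans hq2.1.2.2.2⟩
  have h1 : distT q1 ≤ distT q' := hmin1 q' hq'Q
  have hq'Q2 : q' ∈ Q2 := ⟨hq'Q, hd.trans hq2.2⟩
  have h2 : endT q2 ≤ endT q' := hmin2 q' hq'Q2
  have h3 : distT q2 ≤ distT q' := le_trans hq2.2 h1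
  rcases hstrict with hlt | hlt
  · exact absurd h3 (not_le.2 hlt)
  · exact absurd h2 (not_le.2 hlt)

lemma exists_nondom_r (E : Set (TEdge V)) (hE : E.Finite) (hpos : ∀ e ∈ E, 0 < e.len)
    (b y : V) (tα tω : ℝ) (r0 : List (TEdge V))
    (h0 : IsPath E b y r0) (hw : InWin tα tω r0) :
    ∃ r, IsPath E b y r ∧ InWin tα tω r ∧ distT r ≤ distT r0 ∧ startT r0 ≤ startT r ∧
      InvDistNonDomW E b y tα tω r := by
  set R : Set (List (TEdge V)) :=
    {r | IsPath E b y r ∧ InWin tα tω r ∧ distT r ≤ distT r0 ∧ startT r0 ≤ startT r} with hRdef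
  have hRfin : R.Finite :=
    (finite_goodlists E hE hpos).subset fun r hr => ⟨hr.1.2.1, hr.1.2.2.2.2⟩
  have hRne : R.Nonempty := ⟨r0, h0, hw, le_refl _, le_refl _⟩
  obtain ⟨r1, hr1, hmin1⟩ := Set.exists_min_image R distT hRfin hRne
  set R2 : Set (List (TEdge V)) := {r ∈ R | distT r ≤ distT r1} with hR2def
  have hR2fin : R2.Finite := hRfin.subset fun r hr => hr.1
  obtain ⟨r2, hr2, hmax2⟩ := Set.exists_max_image R2 startT hR2fin ⟨r1, hr1, le_refl _⟩
  refine ⟨r2, hr2.1.1, hr2.1.2.1, hr2.1.2.2.1, hr2.1.2.2.2, hr2.1.1, hr2.1.2.1, ?_⟩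
  rintro ⟨r', hr'path, hr'win, hd, hs, hstrict⟩
  have hr'R : r' ∈ R := ⟨hr'path, hr'win, hd.trans hr2.1.2.2.1, hr2.1.2.2.2.trans hs⟩
  have h1 : distT r1 ≤ distT r' := hmin1 r' hr'R
  have hr'R2 : r' ∈ R2 := ⟨hr'R, hd.trans hr2.2⟩
  have h2 : startT r' ≤ startT r2 := hmax2 r' hr'R2
  have h3 : distT r2 ≤ distT r' := le_trans hr2.2 h1
  rcases hstrict with hlt | hlt
  · exact absurd h3 (not_le.2 hlt)
  · exact absurd h2 (not_le.2 hlt)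

lemma glue (E : Set (TEdge V)) {x y b : V} {q r : List (TEdge V)}
    (hq : IsPath E x b q) (hr : IsPath E b y r) (hle : endT q ≤ startT r) :
    IsPath E x y (q ++ r) := by
  obtain ⟨hq0, hqE, hqh, hql, hqc⟩ := hq
  obtain ⟨hr0, hrE, hrh, hrl, hrc⟩ := hr
  refine ⟨by simp [hq0], ?_, ?_, ?_, ?_⟩
  · intro e he
    rcases List.mem_append.1 he with h | h
    exacts [hqE e h, hrE e h]
  · rw [head?_append' q r hq0]; exact hqh
  · rw [List.getLast?_append_of_ne_nil q hr0]; exact hrl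
  · refine List.isChain_append.2 ⟨hqc, hrc, ?_⟩
    intro e he f hf
    obtain ⟨e', he', he'd⟩ := last_dst hql
    obtain ⟨f', hf', hf's⟩ := head_src hrh
    have hee : e = e' := by rw [he'] at he; exact (Option.mem_some_iff.mp he).symm
    have hff : f = f' := by rw [hf'] at hf; exact (Option.mem_some_iff.mp hf).symm
    subst hee; subst hff
    refine ⟨by rw [he'd, hf's], ?_⟩
    have h1 : endT q = e.t + e.len := endT_eq q e he'
    have h2 : startT r = f.t := startT_eq r f hf'
    rw [h1, h2] at hle
    exact hle

end Aux

/-- If there is a temporal beer path from `x` to `y` within `[tα, tω]`, then there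
is a shortest temporal beer path within `[tα, tω]` through some active beer vertex
`b` at a time `t ∈ T b`, whose `x`-`b` subpath is distance-wise non-dominated and
whose `b`-`y` subpath is inverse-distance-wise non-dominated (within `[tα, tω]`). -/


theorem stmt4 (E : Set (TEdge V)) (hE : E.Finite) (hpos : ∀ e ∈ E, 0 < e.len)
    (B : Set V) (T : V → Set ℝ) (x y : V) (tα tω : ℝ)
    (hex : ∃ p, IsBeerPath E B T x y p ∧ InWin tα tω p) :
    ∃ p, IsBeerPath E B T x y p ∧ InWin tα tω p ∧
      (∀ p', IsBeerPath E B T x y p' → InWin tα tω p' → distT p ≤ distT p') ∧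
      ∃ b ∈ B, ∃ t ∈ T b, ∃ q r, BeerSplit x b t p q r ∧
        (q ≠ [] → DistNonDomW E x b tα tω q) ∧ (r ≠ [] → InvDistNonDomW E b y tα tω r) := by
  classical
  have hfin : {p : List (TEdge V) | (∀ e ∈ p, e ∈ E) ∧ List.Chain' compat p}.Finite :=
    finite_goodlists E hE hpos
  have hSfin : {p | IsBeerPath E B T x y p ∧ InWin tα tω p}.Finite :=
    hfin.subset fun p hp => ⟨hp.1.1.2.1, hp.1.1.2.2.2.2⟩
  have hSne : {p | IsBeerPath E B T x y p ∧ InWin tα tω p}.Nonempty := hex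
  obtain ⟨p0, hp0S, hp0min⟩ :=
    Set.exists_min_image {p | IsBeerPath E B T x y p ∧ InWin tα tω p} distT hSfin hSne
  obtain ⟨⟨hp0path, b, hbB, t, htT, q0, r0, hpe, hqb, hqt, hrt⟩, hp0win⟩ := hp0S
  subst hpe
  rcases eq_or_ne q0 ([] : List (TEdge V)) with hq0 | hq0
  · -- q0 = [], so b = x and the whole path is r0
    subst hq0
    have hbx : x = b := by simpa using hqb
    subst hbx
    simp only [List.nil_append] at hp0path hp0win hp0min
    have hr0ne : r0 ≠ [] := hp0path.1
    obtain ⟨r', hr'path, hr'win, hr'dist, hr'start, hr'nondom⟩ :=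
      exists_nondom_r E hE hpos x y tα tω r0 hp0path hp0win
    obtain ⟨f0, hf0, _⟩ := head_src hp0path.2.2.1
    have htr0 : t ≤ startT r0 := by
      rw [startT_eq r0 f0 hf0]
      exact hrt f0 (by rw [hf0]; exact rfl)
    have hsplit : BeerSplit x x t r' [] r' := by
      refine ⟨rfl, by simp, by simp, ?_⟩
      intro f hf
      have hf' : r'.head? = some f := Option.mem_def.mp hf
      have : startT r' = f.t := startT_eq r' f hf'
      calc t ≤ startT r0 := htr0
        _ ≤ startT r' := hr'start
        _ = f.t := this
    refine ⟨r', ⟨hr'path, x, hbB, t, htT, [], r', hsplit⟩, hr'win, ?_,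
      x, hbB, t, htT, [], r', hsplit, fun h => absurd rfl h, fun _ => hr'nondom⟩
    intro p' hb' hw'
    calc distT r' ≤ distT r0 := hr'dist
      _ ≤ distT p' := hp0min p' ⟨hb', hw'⟩
  rcases eq_or_ne r0 ([] : List (TEdge V)) with hr0 | hr0
  · -- r0 = [], so b = y and the whole path is q0
    subst hr0
    rw [List.append_nil] at hp0path hp0win hp0min
    have hby : y = b := by
      rw [hp0path.2.2.2.1] at hqb
      simpa using hqb
    subst hby
    obtain ⟨q', hq'path, hq'win, hq'dist, hq'end, hq'nondom⟩ :=
      exists_nondom_q E hE hpos x y tα tω q0 hp0path hp0win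
    obtain ⟨e0, he0, _⟩ := last_dst hp0path.2.2.2.1
    have htq0 : endT q0 ≤ t := by
      rw [endT_eq q0 e0 he0]
      exact hqt e0 (by rw [he0]; exact rfl)
    have hsplit : BeerSplit x y t q' q' [] := by
      refine ⟨(List.append_nil q').symm, by simp [hq'path.2.2.2.1], ?_, by simp⟩
      intro e he
      have he' : q'.getLast? = some e := Option.mem_def.mp he
      have : endT q' = e.t + e.len := endT_eq q' e he'
      calc e.t + e.len = endT q' := this.symm
        _ ≤ endT q0 := hq'end
        _ ≤ t := htq0
    refine ⟨q', ⟨hq'path, y, hbB, t, htT, q', [], hsplit⟩, hq'win, ?_,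
      y, hbB, t, htT, q', [], hsplit, fun _ => hq'nondom, fun h => absurd rfl h⟩
    intro p' hb' hw'
    calc distT q' ≤ distT q0 := hq'dist
      _ ≤ distT p' := hp0min p' ⟨hb', hw'⟩
  · -- both q0 and r0 nonempty
    obtain ⟨hne, hmem, hhead, hlast, hchain⟩ := hp0path
    have hq0mem : ∀ e ∈ q0, e ∈ E := fun e he => hmem e (List.mem_append_left r0 he)
    have hr0mem : ∀ e ∈ r0, e ∈ E := fun e he => hmem e (List.mem_append_right q0 he)
    rw [head?_append' q0 r0 hq0] at hhead
    rw [List.getLast?_append_of_ne_nil q0 hr0] at hlast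
    obtain ⟨hcq, hcr, hlink⟩ := List.isChain_append.1 hchain
    obtain ⟨e0, he0⟩ := Option.isSome_iff_exists.1 (List.getLast?_isSome.2 hq0)
    obtain ⟨f0, hf0⟩ := Option.isSome_iff_exists.1 (List.isSome_head?.2 hr0)
    have he0b : e0.dst = b := by
      rw [he0] at hqb
      simpa using hqb
    have hcomp : compat e0 f0 :=
      hlink e0 (by rw [he0]; exact rfl) f0 (by rw [hf0]; exact rfl)
    have hf0b : f0.src = b := by rw [← hcomp.1, he0b]
    have hq0path : IsPath E x b q0 :=
      ⟨hq0, hq0mem, hhead, by rw [he0]; simp [he0b], hcq⟩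
    have hr0path : IsPath E b y r0 :=
      ⟨hr0, hr0mem, by rw [hf0]; simp [hf0b], hlast, hcr⟩
    have htq0 : endT q0 ≤ t := by
      rw [endT_eq q0 e0 he0]
      exact hqt e0 (by rw [he0]; exact rfl)
    have htr0 : t ≤ startT r0 := by
      rw [startT_eq r0 f0 hf0]
      exact hrt f0 (by rw [hf0]; exact rfl)
    have hq0se : startT q0 ≤ endT q0 := startT_le_endT E hpos q0 hq0 hq0mem hcq
    have hr0se : startT r0 ≤ endT r0 := startT_le_endT E hpos r0 hr0 hr0mem hcr
    have hwq0 : InWin tα tω q0 := by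
      constructor
      · rw [← startT_append q0 r0 hq0]; exact hp0win.1
      · have h1 : endT (q0 ++ r0) ≤ tω := hp0win.2
        rw [endT_append q0 r0 hr0] at h1
        linarith
    have hwr0 : InWin tα tω r0 := by
      constructor
      · have h1 : tα ≤ startT (q0 ++ r0) := hp0win.1
        rw [startT_append q0 r0 hq0] at h1
        linarith
      · rw [← endT_append q0 r0 hr0]; exact hp0win.2
    obtain ⟨q', hq'path, hq'win, hq'dist, hq'end, hq'nondom⟩ :=
      exists_nondom_q E hE hpos x b tα tω q0 hq0path hwq0
    obtain ⟨r', hr'path, hr'win, hr'dist, hr'start, hr'nondom⟩ :=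
      exists_nondom_r E hE hpos b y tα tω r0 hr0path hwr0
    have hq'ne : q' ≠ [] := hq'path.1
    have hr'ne : r' ≠ [] := hr'path.1
    have hglue0 : endT q' ≤ startT r' := by linarith
    have hp'path : IsPath E x y (q' ++ r') := glue E hq'path hr'path hglue0
    have hsplit : BeerSplit x b t (q' ++ r') q' r' := by
      refine ⟨rfl, ?_, ?_, ?_⟩
      · obtain ⟨e', he', he'b⟩ := last_dst hq'path.2.2.2.1
        rw [he']
        simpa using he'b
      · intro e he
        have he' : q'.getLast? = some e := Option.mem_def.mp he
        have : endT q' = e.t + e.len := endT_eq q' e he'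
        linarith [hq'end, htq0]
      · intro f hf
        have hf' : r'.head? = some f := Option.mem_def.mp hf
        have : startT r' = f.t := startT_eq r' f hf'
        linarith [hr'start, htr0]
    have hwin : InWin tα tω (q' ++ r') := by
      constructor
      · rw [startT_append q' r' hq'ne]; exact hq'win.1
      · rw [endT_append q' r' hr'ne]; exact hr'win.2
    refine ⟨q' ++ r', ⟨hp'path, b, hbB, t, htT, q', r', hsplit⟩, hwin, ?_,
      b, hbB, t, htT, q', r', hsplit, fun _ => hq'nondom, fun _ => hr'nondom⟩
    intro p' hb' hw'
    have h1 : distT (q0 ++ r0) ≤ distT p' := hp0min p' ⟨hb', hw'⟩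
    rw [distT_append] at h1
    rw [distT_append]
    linarith
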